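/- Let N ≥ 6 be an even natural number and let θ : Fin N → ℝ satisfy: for all pairwise distinct indices i, j, l, cos(2(θ_i − θ_j)) + cos(2(θ_j − θ_l)) + cos(2(θ_i − θ_l)) ≤ 1 + 2·cos(4π/N). Then there exist a real number c and a bijection σ : Fin N → Fin N such that for every i there is an integer k with 2θ_i = c + 4π·σ(i)/N + 2πk; that is, the doubled angles 2θ_i, taken modulo 2π, form (up to a common rotation) exactly the multiset {4π·m/N mod 2π : m = 0, 1, …, N−1}. -/

import Mathlib

open Real

lemma trig_identity (a b : ℝ) :
    cos a + cos b - (1 + cos (a+b)) = 4 * sin (a/2) * sin (b/2) * cos (a/2 + b/2) := by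
  have h1 : cos a = 1 - 2 * sin (a/2)^2 := by
    have := cos_two_mul' (a/2); rw [show 2*(a/2) = a by ring] at this
    nlinarith [sin_sq_add_cos_sq (a/2)]
  have h2 : cos b = 1 - 2 * sin (b/2)^2 := by
    have := cos_two_mul' (b/2); rw [show 2*(b/2) = b by ring] at this
    nlinarith [sin_sq_add_cos_sq (b/2)]
  have h3 : cos (a+b) = 2 * cos (a/2 + b/2)^2 - 1 := by
    have := cos_two_mul (a/2 + b/2); rw [show 2*(a/2+b/2) = a+b by ring] at this
    linarith
  rw [h1, h2, h3, cos_add]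
  nlinarith [sin_sq_add_cos_sq (a/2), sin_sq_add_cos_sq (b/2)]

set_option maxHeartbeats 2000000 in
theorem stmt_9 (N : ℕ) (hN : 6 ≤ N) (hNeven : Even N) (θ : Fin N → ℝ)
    (hopt : ∀ i j l : Fin N, i ≠ j → i ≠ l → j ≠ l →
      Real.cos (2 * (θ i - θ j)) + Real.cos (2 * (θ j - θ l)) +
        Real.cos (2 * (θ i - θ l)) ≤ 1 + 2 * Real.cos (4 * Real.pi / N)) :
    ∃ c : ℝ, ∃ σ : Equiv.Perm (Fin N), ∀ i : Fin N, ∃ k : ℤ,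
      2 * θ i = c + 4 * Real.pi * ((σ i : ℕ) : ℝ) / N + 2 * Real.pi * k := by
  obtain ⟨M, hM⟩ : ∃ M, N = 2 * M := by
    obtain ⟨m, hm⟩ := hNeven; exact ⟨m, by omega⟩
  have hM3 : 3 ≤ M := by omega
  have hNpos : 0 < N := by omega
  have hπ : (0:ℝ) < π := Real.pi_pos
  have hNR : (6:ℝ) ≤ (N:ℝ) := by exact_mod_cast hN
  set δ : ℝ := 4 * π / N with hδdef
  have hδpos : 0 < δ := by positivity
  have hδle : δ ≤ 2 * π / 3 := by
    rw [hδdef, div_le_div_iff₀ (by linarith) (by norm_num)]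
    nlinarith
  have hMδ : (M:ℝ) * δ = 2 * π := by
    rw [hδdef]
    have hNM : (N:ℝ) = 2 * M := by exact_mod_cast hM
    have hMR : (0:ℝ) < (M:ℝ) := by exact_mod_cast (by omega : 0 < M)
    rw [hNM]
    field_simp; ring
  set c : ℝ := 2 * θ ⟨0, hNpos⟩ with hc
  set x : Fin N → ℝ := fun i => 2*π * Int.fract ((2*θ i - c)/(2*π)) with hxdef
  have hx0 : ∀ i, 0 ≤ x i := fun i => by
    have := Int.fract_nonneg ((2*θ i - c)/(2*π)); positivity
  have hx2 : ∀ i, x i < 2*π := fun i => by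
    have := Int.fract_lt_one ((2*θ i - c)/(2*π))
    calc x i < 2*π * 1 := by
          apply mul_lt_mul_of_pos_left this (by linarith)
      _ = 2*π := by ring
  have hxk : ∀ i, ∃ n : ℤ, 2*θ i = c + x i + 2*π*n := by
    intro i
    refine ⟨⌊(2*θ i - c)/(2*π)⌋, ?_⟩
    rw [hxdef]; simp only [Int.fract]
    field_simp
    ring
  set τ : Equiv.Perm (Fin N) := Tuple.sort x with hτ
  set y : Fin N → ℝ := x ∘ τ with hy
  have hymono : Monotone y := Tuple.monotone_sort x
  set Y : ℕ → ℝ := fun n => y ⟨n % N, Nat.mod_lt n hNpos⟩ + 2*π*(n / N : ℕ) with hY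
  set u : ℕ → Fin N := fun n => τ ⟨n % N, Nat.mod_lt n hNpos⟩ with hu
  have hYlt : ∀ n (h : n < N), Y n = y ⟨n, h⟩ := by
    intro n h
    rw [hY]; simp [Nat.mod_eq_of_lt h, Nat.div_eq_of_lt h]
  have hYN : Y N = y ⟨0, hNpos⟩ + 2*π := by
    rw [hY]; simp [Nat.mod_self, Nat.div_self hNpos]
  have hYN1 : Y (N+1) = y ⟨1, by omega⟩ + 2*π := by
    rw [hY]
    have h1 : (N+1) % N = 1 := by
      rw [Nat.add_mod_left]; exact Nat.mod_eq_of_lt (by omega)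
    have h2 : (N+1) / N = 1 := Nat.div_eq_of_lt_le (by omega) (by omega)
    simp [h1, h2]
  -- monotone of Y on [0, N+1]
  have hYmono : ∀ n, n ≤ N → Y n ≤ Y (n+1) := by
    intro n hn
    rcases lt_trichotomy (n+1) N with h | h | h
    · rw [hYlt n (by omega), hYlt (n+1) h]
      exact hymono (by simp [Fin.le_def])
    · have hYn1 : Y (n+1) = y ⟨0, hNpos⟩ + 2*π := by rw [h, hYN]
      rw [hYlt n (by omega), hYn1]
      have h2 := hx2 (τ ⟨n, by omega⟩)
      have h0 := hx0 (τ ⟨0, hNpos⟩)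
      simp only [hy, Function.comp_apply]
      linarith
    · have hn' : n = N := by omega
      rw [hn', hYN, hYN1]
      have : y ⟨0, hNpos⟩ ≤ y ⟨1, by omega⟩ := hymono (by simp [Fin.le_def])
      linarith
  -- Y p = 2θ(u p) - c + 2π * integer
  have hYu : ∀ p, ∃ n : ℤ, Y p = 2*θ (u p) - c + 2*π*n := by
    intro p
    obtain ⟨n, hn⟩ := hxk (u p)
    refine ⟨(p / N : ℕ) - n, ?_⟩
    have hYp : Y p = x (u p) + 2*π*(p / N : ℕ) := rfl
    have hcast : ((((p / N : ℕ) : ℤ) - n : ℤ) : ℝ) = ((p / N : ℕ) : ℝ) - (n : ℝ) := by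
      rw [Int.cast_sub, Int.cast_natCast]
    rw [hYp, hcast]
    linarith
  have hucos : ∀ p q, cos (Y p - Y q) = cos (2*(θ (u p) - θ (u q))) := by
    intro p q
    obtain ⟨np, hnp⟩ := hYu p
    obtain ⟨nq, hnq⟩ := hYu q
    have : Y p - Y q = 2*(θ (u p) - θ (u q)) + (↑(np - nq)) * (2*π) := by
      rw [hnp, hnq]; push_cast; ring
    rw [this, Real.cos_add_int_mul_two_pi]
  have hund : ∀ p q, p < q → q < p + N → u p ≠ u q := by
    intro p q hpq hqp h
    have hmod : p % N = q % N := by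
      have h2 : (⟨p % N, Nat.mod_lt p hNpos⟩ : Fin N) = ⟨q % N, Nat.mod_lt q hNpos⟩ :=
        τ.injective h
      exact congrArg Fin.val h2
    have hdvd : N ∣ q - p := (Nat.modEq_iff_dvd' (le_of_lt hpq)).mp hmod
    have := Nat.le_of_dvd (by omega) hdvd
    omega
  -- step 1 : no three points in an arc shorter than δ
  have key3 : ∀ p, p + 2 ≤ N + 1 → δ ≤ Y (p+2) - Y p := by
    intro p hp
    by_contra hcon
    push_neg at hcon
    set a : ℝ := Y (p+1) - Y p with ha
    set b : ℝ := Y (p+2) - Y (p+1) with hb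
    have ha0 : 0 ≤ a := by have := hYmono p (by omega); rw [ha]; linarith
    have hb0 : 0 ≤ b := by have := hYmono (p+1) (by omega); rw [hb]; linarith
    have hab : a + b < δ := by rw [ha, hb]; linarith
    have hd1 : u (p+2) ≠ u (p+1) := (hund (p+1) (p+2) (by omega) (by omega)).symm
    have hd2 : u (p+2) ≠ u p := (hund p (p+2) (by omega) (by omega)).symm
    have hd3 : u (p+1) ≠ u p := (hund p (p+1) (by omega) (by omega)).symm
    have hh := hopt (u (p+2)) (u (p+1)) (u p) hd1 hd2 hd3
    rw [← hucos (p+2) (p+1), ← hucos (p+1) p, ← hucos (p+2) p] at hh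
    have e1 : Y (p+2) - Y (p+1) = b := by rw [hb]
    have e2 : Y (p+1) - Y p = a := by rw [ha]
    have e3 : Y (p+2) - Y p = a + b := by rw [ha, hb]; ring
    rw [e1, e2, e3] at hh
    have hid := trig_identity a b
    have hs1 : 0 ≤ sin (a/2) := sin_nonneg_of_nonneg_of_le_pi (by linarith) (by linarith)
    have hs2 : 0 ≤ sin (b/2) := sin_nonneg_of_nonneg_of_le_pi (by linarith) (by linarith)
    have hs3 : 0 ≤ cos (a/2 + b/2) := by
      apply cos_nonneg_of_mem_Icc
      constructor <;> linarith
    have hge : cos a + cos b - (1 + cos (a+b)) ≥ 0 := by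
      rw [hid]; positivity
    have hlt : cos δ < cos (a+b) :=
      cos_lt_cos_of_nonneg_of_le_pi (by linarith) (by linarith) hab
    linarith
  -- step 2 : equality in every 2-step gap
  have keyeq : ∀ p, p + 2 ≤ N + 1 → Y (p+2) - Y p = δ := by
    have heven : ∀ m, m < M → Y (2*(m+1)) - Y (2*m) = δ := by
      have hsum : ∑ m ∈ Finset.range M, (Y (2*(m+1)) - Y (2*m)) = 2*π := by
        rw [Finset.sum_range_sub (fun m => Y (2*m)) M]
        rw [show 2*M = N by omega, hYN, show (2*0) = 0 by ring, hYlt 0 hNpos]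
        ring
      have hterm : ∀ m ∈ Finset.range M, 0 ≤ Y (2*(m+1)) - Y (2*m) - δ := by
        intro m hm
        simp only [Finset.mem_range] at hm
        have := key3 (2*m) (by omega)
        rw [show 2*(m+1) = 2*m+2 by ring]
        linarith
      have hzero : ∑ m ∈ Finset.range M, (Y (2*(m+1)) - Y (2*m) - δ) = 0 := by
        rw [Finset.sum_sub_distrib, hsum, Finset.sum_const, Finset.card_range]
        simp only [nsmul_eq_mul]
        linarith [hMδ]
      intro m hm
      have := (Finset.sum_eq_zero_iff_of_nonneg hterm).mp hzero m (Finset.mem_range.mpr hm)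
      linarith
    have hodd : ∀ m, m < M → Y (2*(m+1)+1) - Y (2*m+1) = δ := by
      have hsum : ∑ m ∈ Finset.range M, (Y (2*(m+1)+1) - Y (2*m+1)) = 2*π := by
        rw [Finset.sum_range_sub (fun m => Y (2*m+1)) M]
        rw [show 2*M+1 = N+1 by omega, hYN1, show (2*0+1) = 1 by ring, hYlt 1 (by omega)]
        ring
      have hterm : ∀ m ∈ Finset.range M, 0 ≤ Y (2*(m+1)+1) - Y (2*m+1) - δ := by
        intro m hm
        simp only [Finset.mem_range] at hm
        have := key3 (2*m+1) (by omega)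
        rw [show 2*(m+1)+1 = 2*m+1+2 by ring]
        linarith
      have hzero : ∑ m ∈ Finset.range M, (Y (2*(m+1)+1) - Y (2*m+1) - δ) = 0 := by
        rw [Finset.sum_sub_distrib, hsum, Finset.sum_const, Finset.card_range]
        simp only [nsmul_eq_mul]
        linarith [hMδ]
      intro m hm
      have := (Finset.sum_eq_zero_iff_of_nonneg hterm).mp hzero m (Finset.mem_range.mpr hm)
      linarith
    intro p hp
    rcases Nat.even_or_odd p with ⟨m, hm⟩ | ⟨m, hm⟩
    · have hmM : m < M := by omega
      have := heven m hmM
      rw [show 2*(m+1) = 2*m+2 by ring] at this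
      rw [show p = 2*m by omega]
      exact this
    · have hmM : m < M := by omega
      have := hodd m hmM
      rw [show 2*(m+1)+1 = (2*m+1)+2 by ring] at this
      rw [show p = 2*m+1 by omega]
      exact this
  -- step 3 : each consecutive gap is 0 or δ
  have keysplit : ∀ p, p + 2 ≤ N + 1 → Y (p+1) = Y p ∨ Y (p+1) = Y p + δ := by
    intro p hp
    set a : ℝ := Y (p+1) - Y p with ha
    set b : ℝ := Y (p+2) - Y (p+1) with hb
    have ha0 : 0 ≤ a := by have := hYmono p (by omega); rw [ha]; linarith
    have hb0 : 0 ≤ b := by have := hYmono (p+1) (by omega); rw [hb]; linarith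
    have hab : a + b = δ := by have := keyeq p hp; rw [ha, hb]; linarith
    have hd1 : u (p+2) ≠ u (p+1) := (hund (p+1) (p+2) (by omega) (by omega)).symm
    have hd2 : u (p+2) ≠ u p := (hund p (p+2) (by omega) (by omega)).symm
    have hd3 : u (p+1) ≠ u p := (hund p (p+1) (by omega) (by omega)).symm
    have hh := hopt (u (p+2)) (u (p+1)) (u p) hd1 hd2 hd3
    rw [← hucos (p+2) (p+1), ← hucos (p+1) p, ← hucos (p+2) p] at hh
    have e1 : Y (p+2) - Y (p+1) = b := by rw [hb]
    have e2 : Y (p+1) - Y p = a := by rw [ha]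
    have e3 : Y (p+2) - Y p = a + b := by rw [ha, hb]; ring
    rw [e1, e2, e3, hab] at hh
    have hid := trig_identity a b
    rw [hab] at hid
    have hcpos : 0 < cos (a/2 + b/2) := by
      refine cos_pos_of_mem_Ioo ⟨?_, ?_⟩ <;> nlinarith
    have hs1 : 0 ≤ sin (a/2) := sin_nonneg_of_nonneg_of_le_pi (by linarith) (by nlinarith)
    have hs2 : 0 ≤ sin (b/2) := sin_nonneg_of_nonneg_of_le_pi (by linarith) (by nlinarith)
    have hprod : sin (a/2) * sin (b/2) = 0 := by nlinarith
    rcases mul_eq_zero.mp hprod with h | h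
    · left
      have h2 : a / 2 = 0 := by
        rw [← sin_eq_zero_iff_of_lt_of_lt (by linarith) (by nlinarith)]
        exact h
      have h3 : a = 0 := by linarith
      rw [ha] at h3; linarith
    · right
      have h2 : b / 2 = 0 := by
        rw [← sin_eq_zero_iff_of_lt_of_lt (by linarith) (by nlinarith)]
        exact h
      have hb' : b = 0 := by linarith
      have h3 : a = δ := by rw [← hab, hb']; ring
      rw [ha] at h3; linarith
  -- exclude the alternating case: Y 1 = Y 0
  have hY10 : Y 1 = Y 0 := by
    rcases keysplit 0 (by omega) with h | h
    · exact h
    · exfalso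
      have hoddgrid : ∀ m, m < M → Y (2*m+1) = Y 0 + ((m:ℝ)+1) * δ := by
        intro m
        induction m with
        | zero => intro _; rw [show 2*0+1 = 1 by ring, h]; push_cast; ring
        | succ n ih =>
          intro hn
          have h1 := ih (by omega)
          have h2 := keyeq (2*n+1) (by omega)
          have h3 : Y (2*(n+1)+1) = Y ((2*n+1)+2) := by norm_num; ring_nf
          rw [h3]
          push_cast
          push_cast at h1
          linarith
      have hlast := hoddgrid (M-1) (by omega)
      rw [show 2*(M-1)+1 = N-1 by omega] at hlast
      have hM1 : ((M-1:ℕ):ℝ) + 1 = (M:ℝ) := by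
        have h1 : 1 ≤ M := by omega
        push_cast [h1]
        ring
      rw [hM1, hMδ] at hlast
      have hYl : Y (N-1) < 2*π + Y 0 := by
        rw [hYlt (N-1) (by omega), hYlt 0 hNpos]
        have h2 := hx2 (τ ⟨N-1, by omega⟩)
        have h0 := hx0 (τ ⟨0, hNpos⟩)
        simp only [hy, Function.comp_apply]
        linarith
      linarith
  -- the grid formula
  have hgrid : ∀ k, k < N → Y k = Y 0 + ((k/2 : ℕ) : ℝ) * δ := by
    intro k
    induction k using Nat.strong_induction_on with
    | _ k ih =>
      intro hk
      match k with
      | 0 => simp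
      | 1 => rw [hY10]; simp
      | (k'+2) =>
        have h2 := keyeq k' (by omega)
        have h1 := ih k' (by omega) (by omega)
        have h4 : (k'+2)/2 = k'/2 + 1 := by omega
        rw [h4]
        push_cast
        push_cast at h1
        linear_combination h1 + h2
  -- assemble the permutation
  have hgbound : ∀ k : Fin N, k.val/2 + M * (k.val % 2) < N := by
    intro k
    have hkl := k.isLt
    rcases Nat.mod_two_eq_zero_or_one k.val with h | h <;> rw [h]
    · simp; omega
    · rw [mul_one]; omega
  set g : Fin N → Fin N := fun k => ⟨k.val/2 + M * (k.val % 2), hgbound k⟩ with hg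
  have hginj : Function.Injective g := by
    intro a b hab
    have h := congrArg Fin.val hab
    simp only [hg] at h
    have ha := a.isLt
    have hb := b.isLt
    rcases Nat.mod_two_eq_zero_or_one a.val with h1 | h1 <;>
      rcases Nat.mod_two_eq_zero_or_one b.val with h2 | h2 <;>
      rw [h1, h2] at h <;> simp only [mul_zero, mul_one, add_zero] at h <;>
      (apply Fin.ext; omega)
  set σ : Equiv.Perm (Fin N) :=
    τ.symm.trans (Equiv.ofBijective g (Finite.injective_iff_bijective.mp hginj)) with hσ
  refine ⟨c + Y 0, σ, ?_⟩
  intro i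
  obtain ⟨n, hn⟩ := hxk i
  set k : Fin N := τ.symm i with hk
  have hxiY : x i = Y k.val := by
    rw [hYlt k.val k.isLt]
    have : y ⟨k.val, k.isLt⟩ = x (τ k) := rfl
    rw [this, hk, Equiv.apply_symm_apply]
  have hxi : x i = Y 0 + ((k.val/2 : ℕ):ℝ) * δ := by
    rw [hxiY]; exact hgrid k.val k.isLt
  have hσi : ((σ i : Fin N) : ℕ) = k.val/2 + M * (k.val % 2) := rfl
  refine ⟨n - (k.val % 2 : ℕ), ?_⟩
  rw [hn, hσi]
  have hwit : ((n - ((k.val % 2 : ℕ) : ℤ) : ℤ) : ℝ) = (n : ℝ) - ((k.val % 2 : ℕ) : ℝ) := by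
    rw [Int.cast_sub, Int.cast_natCast]
  have hkey : 4*π*(((k.val/2 + M * (k.val % 2) : ℕ)):ℝ)/N
      = δ*((k.val/2 : ℕ):ℝ) + 2*π*((k.val%2 : ℕ):ℝ) := by
    push_cast
    rw [hδdef, ← hMδ, hδdef]
    field_simp
  rw [hkey, hwit]
  linarith [hxi]
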